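/- Let Ψ : (0, ∞) → (0, ∞) be an increasing function such that lim_{x→∞} Ψ(x)/Ψ(x−1) = ∞. Then limsup_{n→∞} Ψ(n) · Σ_{k=n}^∞ 1/Ψ(k) ≤ 2. -/

import Mathlib

open Filter
open scoped Topology

/-- If `Ψ : (0,∞) → (0,∞)` is increasing with `Ψ(x)/Ψ(x−1) → ∞` as `x → ∞`, then
`limsup_{n→∞} Ψ(n) · Σ_{k=n}^∞ 1/Ψ(k) ≤ 2`. -/
theorem limsup_mul_tsum_inv_le_two_of_superexp
    (Ψ : ℝ → ℝ) (hpos : ∀ x > (0 : ℝ), 0 < Ψ x)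
    (hmono : StrictMonoOn Ψ (Set.Ioi 0))
    (hsuper : Tendsto (fun x : ℝ => Ψ x / Ψ (x - 1)) atTop atTop) :
    Filter.limsup (fun n : ℕ =>
        Ψ n * ∑' k : ℕ, 1 / Ψ ((n + k : ℕ) : ℝ)) atTop ≤ 2 := by
  -- choose N such that for x ≥ N, Ψ x / Ψ (x-1) ≥ 2
  obtain ⟨N, hN⟩ := (tendsto_atTop.1 hsuper 2).exists_forall_of_atTop
  set n₀ : ℕ := ⌈max N 1⌉₊ + 1 with hn₀
  have hn₀N : (n₀ : ℝ) ≥ N := by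
    have := Nat.le_ceil (max N 1)
    have h1 : N ≤ max N 1 := le_max_left _ _
    push_cast [hn₀]
    nlinarith [Nat.le_ceil (max N 1)]
  have hn₀1 : (1 : ℕ) ≤ n₀ := by omega
  -- key growth estimate
  have key : ∀ n ≥ n₀, ∀ j : ℕ, (2 : ℝ) ^ j * Ψ n ≤ Ψ ((n + j : ℕ) : ℝ) := by
    intro n hn j
    induction j with
    | zero => simp
    | succ j ih =>
      have hx : (N : ℝ) ≤ ((n + j + 1 : ℕ) : ℝ) := by
        have : (n₀ : ℝ) ≤ ((n + j + 1 : ℕ) : ℝ) := by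
          exact_mod_cast Nat.le_trans hn (by omega)
        linarith
      have h2 := hN _ hx
      have hpos' : 0 < Ψ (((n + j + 1 : ℕ) : ℝ) - 1) := by
        apply hpos
        have : (1 : ℝ) ≤ ((n + j : ℕ) : ℝ) := by exact_mod_cast Nat.le_trans hn₀1 (le_trans hn (by omega))
        push_cast at this ⊢
        linarith
      rw [le_div_iff₀ hpos'] at h2
      have heq : (((n + j + 1 : ℕ) : ℝ) - 1) = ((n + j : ℕ) : ℝ) := by push_cast; ring
      rw [heq] at h2 hpos'
      calc (2:ℝ) ^ (j+1) * Ψ n = 2 * ((2:ℝ)^j * Ψ n) := by ring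
        _ ≤ 2 * Ψ ((n + j : ℕ) : ℝ) := by nlinarith
        _ ≤ Ψ ((n + j + 1 : ℕ) : ℝ) := h2
  have hev : ∀ᶠ n : ℕ in atTop, Ψ n * ∑' k : ℕ, 1 / Ψ ((n + k : ℕ) : ℝ) ≤ 2 := by
    filter_upwards [eventually_ge_atTop n₀] with n hn
    have hΨn : 0 < Ψ n := hpos _ (by exact_mod_cast Nat.lt_of_lt_of_le (by omega) hn)
    have hle : ∀ j : ℕ, 1 / Ψ ((n + j : ℕ) : ℝ) ≤ (1/2 : ℝ) ^ j * (1 / Ψ n) := by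
      intro j
      have hk := key n hn j
      have heq : (1/2:ℝ)^j * (1/Ψ n) = 1/((2:ℝ)^j * Ψ n) := by
        rw [div_pow]; field_simp; simp
      rw [heq]
      exact one_div_le_one_div_of_le (by positivity) hk
    have hsum : Summable (fun j : ℕ => (1/2 : ℝ) ^ j * (1 / Ψ n)) :=
      (summable_geometric_of_lt_one (by norm_num) (by norm_num)).mul_right _
    have hsum' : Summable (fun j : ℕ => 1 / Ψ ((n + j : ℕ) : ℝ)) := by
      apply Summable.of_nonneg_of_le (fun j => _) hle hsum
      intro j
      have : 0 < Ψ ((n + j : ℕ) : ℝ) :=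
        lt_of_lt_of_le (by positivity) (key n hn j)
      positivity
    have htsum : ∑' j : ℕ, 1 / Ψ ((n + j : ℕ) : ℝ) ≤ ∑' j : ℕ, (1/2 : ℝ) ^ j * (1 / Ψ n) :=
      Summable.tsum_le_tsum hle hsum' hsum
    have hgeo : ∑' j : ℕ, (1/2 : ℝ) ^ j * (1 / Ψ n) = 2 * (1 / Ψ n) := by
      rw [tsum_mul_right, tsum_geometric_of_lt_one (by norm_num) (by norm_num)]
      norm_num
    calc Ψ n * ∑' k : ℕ, 1 / Ψ ((n + k : ℕ) : ℝ)
        ≤ Ψ n * (2 * (1 / Ψ n)) := by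
          apply mul_le_mul_of_nonneg_left _ hΨn.le
          rw [← hgeo]; exact htsum
      _ = 2 := by field_simp
  apply limsup_le_of_le _ hev
  · apply IsBoundedUnder.isCoboundedUnder_le
    refine ⟨0, ?_⟩
    rw [eventually_map]
    filter_upwards [eventually_ge_atTop n₀] with n hn
    have hΨn : 0 < Ψ n := hpos _ (by exact_mod_cast Nat.lt_of_lt_of_le (by omega) hn)
    have : 0 ≤ ∑' k : ℕ, 1 / Ψ ((n + k : ℕ) : ℝ) := by
      apply tsum_nonneg
      intro j
      have hk := key n hn j
      have : 0 < Ψ ((n + j : ℕ) : ℝ) := lt_of_lt_of_le (by positivity) hk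
      positivity
    simp only [ge_iff_le]
    positivity
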